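/- For any preference ordering (strict partial order) ≺ on a set W of worlds, there exists a plausibility measure Pl on subsets of W (valued in the set of downward-closed structures obtained by closing the pointwise dual order under least upper bounds) such that for all formulas φ, ψ: the preferential structure (W, ≺, π) satisfies φ ↝ ψ (in the Lewis/Boutilier sense) if and only if the plausibility structure (W, Pl, π) satisfies φ ↝ ψ. -/

import Mathlib

/-- Propositional formulas over atoms of type `α`. -/
inductive Form (α : Type) : Type
  | atom : α → Form α
  | fls : Form α
  | neg : Form α → Form α
  | conj : Form α → Form α → Form α
  | disj : Form α → Form α → Form α
  | impl : Form α → Form α → Form α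

/-- Truth-value of a formula under a valuation. -/
def Form.eval {α : Type} (v : α → Bool) : Form α → Bool
  | .atom a => v a
  | .fls => false
  | .neg φ => !(Form.eval v φ)
  | .conj φ ψ => Form.eval v φ && Form.eval v ψ
  | .disj φ ψ => Form.eval v φ || Form.eval v ψ
  | .impl φ ψ => !(Form.eval v φ) || Form.eval v ψ

/-- The set of worlds (under world-valuation `π`) satisfying `φ`. -/
def truthSet {W α : Type} (π : W → α → Bool) (φ : Form α) : Set W :=
  {w | Form.eval (π w) φ = true}

/-- Propositional validity. -/
def Taut {α : Type} (φ : Form α) : Prop := ∀ v : α → Bool, Form.eval v φ = true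

/-- Propositional consequence. -/
def entails {α : Type} (Γ : Set (Form α)) (φ : Form α) : Prop :=
  ∀ v : α → Bool, (∀ γ ∈ Γ, Form.eval v γ = true) → Form.eval v φ = true

/-- Deductive closure. -/
def Cl {α : Type} (Γ : Set (Form α)) : Set (Form α) := {φ | entails Γ φ}

/-- The conditional `φ ↝ ψ`: `Pl ⟦φ⟧ = ⊥` or `Pl ⟦φ ∧ ψ⟧ > Pl ⟦φ ∧ ¬ψ⟧`. -/
def Cond {W α D : Type} [PartialOrder D] [OrderBot D]
    (Pl : Set W → D) (π : W → α → Bool) (φ ψ : Form α) : Prop :=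
  Pl (truthSet π φ) = ⊥ ∨
    Pl (truthSet π (φ.conj ψ.neg)) < Pl (truthSet π (φ.conj ψ))

/-- Satisfaction of `φ ↝ ψ` in a preferential structure (Lewis/Boutilier style). -/
def PrefSat {W α : Type} (prec : W → W → Prop) (π : W → α → Bool)
    (φ ψ : Form α) : Prop :=
  ∀ w₁ ∈ truthSet π φ, ∃ w₂, (prec w₂ w₁ ∨ w₂ = w₁) ∧
    w₂ ∈ truthSet π (φ.conj ψ) ∧
    ∀ w₃, prec w₃ w₂ → w₃ ∈ truthSet π (φ.impl ψ)

/-- Katsuno–Mendelzon minimization: worlds in `B` closest to some world of `A`. -/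
def minU {W D : Type} [PartialOrder D] (d : W → W → D) (A B : Set W) : Set W :=
  {w | w ∈ B ∧ ∃ w₀ ∈ A, ∀ w' ∈ B, ¬ d w₀ w' < d w₀ w}


section Aux
variable {W : Type} (prec : W → W → Prop)

/-- weak preference -/
def wle (x y : W) : Prop := x = y ∨ prec x y

/-- domain of plausibility values -/
def Dom (W : Type) : Type := Set W

/-- The strict order on plausibility values (sets of worlds). -/
def plt (X Y : Set W) : Prop :=
  (X ∪ Y).Nonempty ∧ ∃ Y₀ : Set W, Y₀ ⊆ Y ∧
    (∀ y ∈ Y₀, ∀ z, wle prec z y → z ∉ X) ∧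
    (∀ w ∈ X ∪ Y, ∃ y ∈ Y₀, wle prec y w)

lemma wle_trans (htrans : ∀ w₁ w₂ w₃, prec w₁ w₂ → prec w₂ w₃ → prec w₁ w₃)
    {x y z : W} (h1 : wle prec x y) (h2 : wle prec y z) : wle prec x z := by
  rcases h1 with rfl | h1
  · exact h2
  · rcases h2 with rfl | h2
    · exact Or.inr h1
    · exact Or.inr (htrans _ _ _ h1 h2)

lemma plt_irrefl (X : Set W) : ¬ plt prec X X := by
  rintro ⟨hne, Y₀, hsub, havoid, hcov⟩
  obtain ⟨w, hw⟩ := hne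
  obtain ⟨y, hy, -⟩ := hcov w hw
  exact havoid y hy y (Or.inl rfl) (hsub hy)

lemma plt_asymm {X Y : Set W} (h1 : plt prec X Y) (h2 : plt prec Y X) : False := by
  obtain ⟨hne, Y₀, hsubY, havoidY, hcovY⟩ := h1
  obtain ⟨-, X₀, hsubX, havoidX, hcovX⟩ := h2
  obtain ⟨w, hw⟩ := hne
  obtain ⟨y, hy, -⟩ := hcovY w hw
  obtain ⟨x, hx, hxy⟩ := hcovX y (Or.inl (hsubY hy))
  exact havoidY y hy x hxy (hsubX hx)

lemma plt_trans (htrans : ∀ w₁ w₂ w₃, prec w₁ w₂ → prec w₂ w₃ → prec w₁ w₃)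
    {X Y Z : Set W} (h1 : plt prec X Y) (h2 : plt prec Y Z) :
    plt prec X Z := by
  obtain ⟨hne1, Y₀, hsubY, havoidY, hcovY⟩ := h1
  obtain ⟨hne2, Z₀, hsubZ, havoidZ, hcovZ⟩ := h2
  refine ⟨?_, Z₀, hsubZ, ?_, ?_⟩
  · obtain ⟨w, hw⟩ := hne2
    obtain ⟨z, hz, -⟩ := hcovZ w hw
    exact ⟨z, Or.inr (hsubZ hz)⟩
  · intro z hz u hu hX
    obtain ⟨y, hy, hyu⟩ := hcovY u (Or.inl hX)
    exact havoidZ z hz y (wle_trans prec htrans hyu hu) (hsubY hy)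
  · intro w hw
    rcases hw with hw | hw
    · obtain ⟨y, hy, hyw⟩ := hcovY w (Or.inl hw)
      obtain ⟨z, hz, hzy⟩ := hcovZ y (Or.inl (hsubY hy))
      exact ⟨z, hz, wle_trans prec htrans hzy hyw⟩
    · exact hcovZ w (Or.inr hw)

/-- the partial order on the value domain -/
def plPO (htrans : ∀ w₁ w₂ w₃, prec w₁ w₂ → prec w₂ w₃ → prec w₁ w₃) :
    PartialOrder (Dom W) where
  le X Y := X = Y ∨ plt prec X Y
  lt X Y := plt prec X Y
  le_refl X := Or.inl rfl
  le_trans X Y Z h1 h2 := by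
    rcases h1 with rfl | h1
    · exact h2
    · rcases h2 with rfl | h2
      · exact Or.inr h1
      · exact Or.inr (plt_trans prec htrans h1 h2)
  lt_iff_le_not_ge X Y := by
    constructor
    · intro h
      refine ⟨Or.inr h, ?_⟩
      rintro (rfl | h2)
      · exact plt_irrefl prec _ h
      · exact plt_asymm prec h h2
    · rintro ⟨h1, h2⟩
      rcases h1 with rfl | h1
      · exact absurd (Or.inl rfl) h2
      · exact h1
  le_antisymm X Y h1 h2 := by
    rcases h1 with rfl | h1
    · rfl
    · rcases h2 with rfl | h2
      · rfl
      · exact absurd h2 (fun h => plt_asymm prec h1 h)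

/-- bottom element -/
def plOB (htrans : ∀ w₁ w₂ w₃, prec w₁ w₂ → prec w₂ w₃ → prec w₁ w₃) :
    @OrderBot (Dom W) (plPO prec htrans).toLE :=
  letI := plPO prec htrans
  { bot := (∅ : Set W)
    bot_le := fun X => by
      show (∅ : Set W) = X ∨ plt prec (∅ : Set W) X
      by_cases h : X = (∅ : Set W)
      · exact Or.inl h.symm
      · refine Or.inr ⟨?_, X, fun _ h => h, ?_, ?_⟩
        · refine Set.Nonempty.mono (Set.subset_union_right (s := (∅ : Set W))) ?_
          exact Set.nonempty_iff_ne_empty.mpr h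
        · intro y _ z _ hz
          exact hz
        · intro w hw
          rcases hw with hw | hw
          · exact absurd hw (Set.notMem_empty w)
          · exact ⟨w, hw, Or.inl rfl⟩ }

end Aux

section Main

variable {W α : Type} (π : W → α → Bool)

lemma mem_truth_conj (φ ψ : Form α) (w : W) :
    w ∈ truthSet π (φ.conj ψ) ↔ w ∈ truthSet π φ ∧ w ∈ truthSet π ψ := by
  simp [truthSet, Form.eval]

lemma mem_truth_conjneg (φ ψ : Form α) (w : W) :
    w ∈ truthSet π (φ.conj ψ.neg) ↔ w ∈ truthSet π φ ∧ w ∉ truthSet π ψ := by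
  simp [truthSet, Form.eval]

lemma mem_truth_neg (ψ : Form α) (w : W) :
    w ∈ truthSet π ψ.neg ↔ w ∉ truthSet π ψ := by
  simp [truthSet, Form.eval]

lemma mem_truth_impl (φ ψ : Form α) (w : W) :
    w ∈ truthSet π (φ.impl ψ) ↔ (w ∈ truthSet π φ → w ∈ truthSet π ψ) := by
  simp only [truthSet, Form.eval, Set.mem_setOf_eq, Bool.or_eq_true, Bool.not_eq_true']
  constructor
  · rintro (h | h) h2
    · rw [h2] at h; exact absurd h (by simp)
    · exact h
  · intro h
    cases hh : Form.eval (π w) φ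
    · exact Or.inl rfl
    · exact Or.inr (h hh)

lemma truth_union (φ ψ : Form α) :
    truthSet π φ =
      truthSet π (φ.conj ψ.neg) ∪ truthSet π (φ.conj ψ) := by
  ext w
  simp only [Set.mem_union, mem_truth_conj, mem_truth_neg]
  by_cases h : w ∈ truthSet π ψ <;> tauto

end Main

theorem stmt4 {W α : Type} (prec : W → W → Prop)
    (hirr : ∀ w, ¬ prec w w)
    (htrans : ∀ w₁ w₂ w₃, prec w₁ w₂ → prec w₂ w₃ → prec w₁ w₃)
    (π : W → α → Bool) :
    ∃ (D : Type) (_ : PartialOrder D) (_ : OrderBot D) (Pl : Set W → D),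
      ∀ φ ψ : Form α, PrefSat prec π φ ψ ↔ Cond Pl π φ ψ := by
  classical
  refine ⟨Dom W, plPO prec htrans, plOB prec htrans, fun X => X, ?_⟩
  intro φ ψ
  set B := truthSet π (φ.conj ψ) with hB
  set C := truthSet π (φ.conj ψ.neg) with hC
  have hU : truthSet π φ = C ∪ B := truth_union π φ ψ
  have hCond : @Cond W α (Dom W) (plPO prec htrans) (plOB prec htrans)
      (fun X => X) π φ ψ ↔
      (truthSet π φ = (∅ : Set W) ∨ plt prec C B) := Iff.rfl
  rw [hCond]
  constructor
  · intro h
    by_cases hA : truthSet π φ = (∅ : Set W)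
    · exact Or.inl hA
    · refine Or.inr ⟨?_, {b | b ∈ B ∧ ∀ z, wle prec z b → z ∉ C},
        fun b hb => hb.1, fun y hy z hz => hy.2 z hz, ?_⟩
      · rw [← hU]
        exact Set.nonempty_iff_ne_empty.mpr hA
      · intro w hw
        rw [← hU] at hw
        obtain ⟨w₂, hp, hw₂B, hmin⟩ := h w hw
        refine ⟨w₂, ⟨hw₂B, ?_⟩, hp.symm.imp id id⟩
        intro z hz hzC
        rcases hz with rfl | hz
        · exact ((mem_truth_conjneg π φ ψ z).mp hzC).2
            ((mem_truth_conj π φ ψ z).mp hw₂B).2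
        · have := (mem_truth_impl π φ ψ z).mp (hmin z hz)
          obtain ⟨hzφ, hzψ⟩ := (mem_truth_conjneg π φ ψ z).mp hzC
          exact hzψ (this hzφ)
  · rintro (hA | ⟨hne, Y₀, hsub, havoid, hcov⟩)
    · intro w₁ hw₁
      rw [hA] at hw₁
      exact absurd hw₁ (Set.notMem_empty w₁)
    · intro w₁ hw₁
      rw [hU] at hw₁
      obtain ⟨y, hy, hle⟩ := hcov w₁ hw₁
      refine ⟨y, hle.symm.imp id id, hsub hy, ?_⟩
      intro w₃ h₃
      rw [mem_truth_impl]
      intro hφ₃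
      by_contra hψ₃
      exact havoid y hy w₃ (Or.inr h₃)
        ((mem_truth_conjneg π φ ψ w₃).mpr ⟨hφ₃, hψ₃⟩)
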